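/- (General global convergence, standard Wolfe) Assume Assumptions A1 and A2 hold for x⁰, and consider the conjugate gradient iteration with Σ_{k≥0} 1/‖d^k‖² = +∞. If there exists c > 0 such that the sufficient descent condition ψ_{x^k}(d^k) ≤ c·ψ_{x^k}(v(x^k)) holds for all k ≥ 0, and each t_k satisfies the standard Wolfe conditions at x^k along d^k, then liminf_{k→∞} ‖v(x^k)‖ = 0. -/

import Mathlib

open scoped BigOperators

noncomputable def pd (n : ℕ) (F : EuclideanSpace ℝ (Fin n) → ℝ)
    (x : EuclideanSpace ℝ (Fin n)) (j : Fin n) : ℝ :=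
  fderiv ℝ F x (EuclideanSpace.single j (1 : ℝ))

noncomputable def glo (n : ℕ) (F H : EuclideanSpace ℝ (Fin n) → ℝ)
    (x : EuclideanSpace ℝ (Fin n)) (j : Fin n) : ℝ :=
  min (pd n F x j) (pd n H x j)

noncomputable def ghi (n : ℕ) (F H : EuclideanSpace ℝ (Fin n) → ℝ)
    (x : EuclideanSpace ℝ (Fin n)) (j : Fin n) : ℝ :=
  max (pd n F x j) (pd n H x j)

noncomputable def gloVec (n : ℕ) (F H : EuclideanSpace ℝ (Fin n) → ℝ)
    (x : EuclideanSpace ℝ (Fin n)) : EuclideanSpace ℝ (Fin n) :=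
  WithLp.toLp 2 (fun j => glo n F H x j)

noncomputable def ghiVec (n : ℕ) (F H : EuclideanSpace ℝ (Fin n) → ℝ)
    (x : EuclideanSpace ℝ (Fin n)) : EuclideanSpace ℝ (Fin n) :=
  WithLp.toLp 2 (fun j => ghi n F H x j)

noncomputable def psi (m n : ℕ) (Gl Gu : Fin m → EuclideanSpace ℝ (Fin n) → ℝ)
    (x v : EuclideanSpace ℝ (Fin n)) : ℝ :=
  ⨆ i : Fin m, (1 / 2 : ℝ) *
    ((∑ j : Fin n, (glo n (Gl i) (Gu i) x j + ghi n (Gl i) (Gu i) x j) * v j) +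
     (∑ j : Fin n, (ghi n (Gl i) (Gu i) x j - glo n (Gl i) (Gu i) x j) * |v j|))

-- helper: the i-th term of psi
noncomputable def phi (m n : ℕ) (Gl Gu : Fin m → EuclideanSpace ℝ (Fin n) → ℝ)
    (i : Fin m) (x v : EuclideanSpace ℝ (Fin n)) : ℝ :=
  (1 / 2 : ℝ) *
    ((∑ j : Fin n, (glo n (Gl i) (Gu i) x j + ghi n (Gl i) (Gu i) x j) * v j) +
     (∑ j : Fin n, (ghi n (Gl i) (Gu i) x j - glo n (Gl i) (Gu i) x j) * |v j|))

lemma psi_eq_csup (m n : ℕ) (Gl Gu : Fin m → EuclideanSpace ℝ (Fin n) → ℝ)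
    (x v : EuclideanSpace ℝ (Fin n)) :
    psi m n Gl Gu x v = ⨆ i : Fin m, phi m n Gl Gu i x v := rfl

lemma psi_zero (m n : ℕ) (hm : 0 < m) (Gl Gu : Fin m → EuclideanSpace ℝ (Fin n) → ℝ)
    (x : EuclideanSpace ℝ (Fin n)) : psi m n Gl Gu x 0 = 0 := by
  haveI : Nonempty (Fin m) := ⟨⟨0, hm⟩⟩
  have h0 : ∀ j : Fin n, (0 : EuclideanSpace ℝ (Fin n)) j = 0 := fun j => rfl
  simp [psi, h0]

lemma phi_le_psi (m n : ℕ) (hm : 0 < m) (Gl Gu : Fin m → EuclideanSpace ℝ (Fin n) → ℝ)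
    (i : Fin m) (x v : EuclideanSpace ℝ (Fin n)) :
    phi m n Gl Gu i x v ≤ psi m n Gl Gu x v := by
  haveI : Nonempty (Fin m) := ⟨⟨0, hm⟩⟩
  exact le_ciSup (f := fun i => phi m n Gl Gu i x v) (Set.Finite.bddAbove (Set.finite_range _)) i

lemma psi_le (m n : ℕ) (hm : 0 < m) (Gl Gu : Fin m → EuclideanSpace ℝ (Fin n) → ℝ)
    (x v : EuclideanSpace ℝ (Fin n)) (C : ℝ)
    (h : ∀ i, phi m n Gl Gu i x v ≤ C) : psi m n Gl Gu x v ≤ C := by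
  haveI : Nonempty (Fin m) := ⟨⟨0, hm⟩⟩
  exact ciSup_le h

lemma sum_mul_le_norm (n : ℕ) (a v : EuclideanSpace ℝ (Fin n)) :
    |∑ j, a j * v j| ≤ ‖a‖ * ‖v‖ := by
  have h := abs_real_inner_le_norm a v
  simpa [PiLp.inner_apply, RCLike.inner_apply, mul_comm] using h

noncomputable def absVec (n : ℕ) (v : EuclideanSpace ℝ (Fin n)) : EuclideanSpace ℝ (Fin n) :=
  WithLp.toLp 2 (fun j => |v j|)

lemma norm_absVec (n : ℕ) (v : EuclideanSpace ℝ (Fin n)) : ‖absVec n v‖ = ‖v‖ := by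
  rw [EuclideanSpace.norm_eq, EuclideanSpace.norm_eq]
  simp [absVec, sq_abs]

lemma sub_apply' (n : ℕ) (a b : EuclideanSpace ℝ (Fin n)) (j : Fin n) :
    (a - b) j = a j - b j := rfl

-- phi difference bound
lemma phi_diff_le (m n : ℕ) (Gl Gu : Fin m → EuclideanSpace ℝ (Fin n) → ℝ)
    (i : Fin m) (y z v : EuclideanSpace ℝ (Fin n)) :
    phi m n Gl Gu i y v - phi m n Gl Gu i z v ≤
      (‖gloVec n (Gl i) (Gu i) y - gloVec n (Gl i) (Gu i) z‖ +
       ‖ghiVec n (Gl i) (Gu i) y - ghiVec n (Gl i) (Gu i) z‖) * ‖v‖ := by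
  set a := gloVec n (Gl i) (Gu i) y
  set b := ghiVec n (Gl i) (Gu i) y
  set a' := gloVec n (Gl i) (Gu i) z
  set b' := ghiVec n (Gl i) (Gu i) z
  have ha : ∀ j, glo n (Gl i) (Gu i) y j = a j := fun j => rfl
  have hb : ∀ j, ghi n (Gl i) (Gu i) y j = b j := fun j => rfl
  have ha' : ∀ j, glo n (Gl i) (Gu i) z j = a' j := fun j => rfl
  have hb' : ∀ j, ghi n (Gl i) (Gu i) z j = b' j := fun j => rfl
  have h1 : |∑ j, (a - a') j * v j| ≤ ‖a - a'‖ * ‖v‖ := sum_mul_le_norm n _ v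
  have h2 : |∑ j, (b - b') j * v j| ≤ ‖b - b'‖ * ‖v‖ := sum_mul_le_norm n _ v
  have h3 : |∑ j, (a - a') j * (absVec n v) j| ≤ ‖a - a'‖ * ‖v‖ := by
    have := sum_mul_le_norm n (a - a') (absVec n v); rwa [norm_absVec] at this
  have h4 : |∑ j, (b - b') j * (absVec n v) j| ≤ ‖b - b'‖ * ‖v‖ := by
    have := sum_mul_le_norm n (b - b') (absVec n v); rwa [norm_absVec] at this
  have key : phi m n Gl Gu i y v - phi m n Gl Gu i z v =
      (1/2 : ℝ) * ((∑ j, (a - a') j * v j) + (∑ j, (b - b') j * v j)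
        + ((∑ j, (b - b') j * (absVec n v) j) - (∑ j, (a - a') j * (absVec n v) j))) := by
    simp only [phi, ha, hb, ha', hb', sub_apply', absVec, sub_mul, add_mul,
      Finset.sum_sub_distrib, Finset.sum_add_distrib]
    ring
  rw [key]
  have e1 := abs_le.mp h1
  have e2 := abs_le.mp h2
  have e3 := abs_le.mp h3
  have e4 := abs_le.mp h4
  nlinarith [e1.1, e1.2, e2.1, e2.2, e3.1, e3.2, e4.1, e4.2]

def LevelSet (m n : ℕ) (Gl Gu : Fin m → EuclideanSpace ℝ (Fin n) → ℝ)
    (x0 : EuclideanSpace ℝ (Fin n)) : Set (EuclideanSpace ℝ (Fin n)) :=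
  {x | ∀ i : Fin m, Gl i x ≤ Gl i x0 ∧ Gu i x ≤ Gu i x0}

def StdWolfe (m n : ℕ) (Gl Gu : Fin m → EuclideanSpace ℝ (Fin n) → ℝ)
    (ρ σ : ℝ) (x d : EuclideanSpace ℝ (Fin n)) (t : ℝ) : Prop :=
  (∀ i : Fin m,
      Gl i (x + t • d) ≤ Gl i x + ρ * t * psi m n Gl Gu x d ∧
      Gu i (x + t • d) ≤ Gu i x + ρ * t * psi m n Gl Gu x d) ∧
  σ * psi m n Gl Gu x d ≤ psi m n Gl Gu (x + t • d) d

def StrongWolfe (m n : ℕ) (Gl Gu : Fin m → EuclideanSpace ℝ (Fin n) → ℝ)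
    (ρ σ : ℝ) (x d : EuclideanSpace ℝ (Fin n)) (t : ℝ) : Prop :=
  (∀ i : Fin m,
      Gl i (x + t • d) ≤ Gl i x + ρ * t * psi m n Gl Gu x d ∧
      Gu i (x + t • d) ≤ Gu i x + ρ * t * psi m n Gl Gu x d) ∧
  |psi m n Gl Gu (x + t • d) d| ≤ σ * |psi m n Gl Gu x d|

def AssumptionA1 (m n : ℕ) (Gl Gu : Fin m → EuclideanSpace ℝ (Fin n) → ℝ)
    (x0 : EuclideanSpace ℝ (Fin n)) : Prop :=
  ∀ i : Fin m, ∃ L : ℝ, 0 < L ∧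
    ∀ y ∈ LevelSet m n Gl Gu x0, ∀ z ∈ LevelSet m n Gl Gu x0,
      ‖gloVec n (Gl i) (Gu i) y - gloVec n (Gl i) (Gu i) z‖ ≤ L * ‖y - z‖ ∧
      ‖ghiVec n (Gl i) (Gu i) y - ghiVec n (Gl i) (Gu i) z‖ ≤ L * ‖y - z‖

def AssumptionA2 (m n : ℕ) (Gl Gu : Fin m → EuclideanSpace ℝ (Fin n) → ℝ)
    (x0 : EuclideanSpace ℝ (Fin n)) : Prop :=
  ∀ y : ℕ → EuclideanSpace ℝ (Fin n),
    (∀ k, y k ∈ LevelSet m n Gl Gu x0) →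
    (∀ (i : Fin m) (k : ℕ), Gl i (y (k+1)) ≤ Gl i (y k) ∧ Gu i (y (k+1)) ≤ Gu i (y k)) →
    ∀ i : Fin m, (∃ Cl : ℝ, ∀ k, Cl ≤ Gl i (y k)) ∧ (∃ Cu : ℝ, ∀ k, Cu ≤ Gu i (y k))

set_option maxHeartbeats 1000000 in
theorem general_convergence_std_wolfe (m n : ℕ) (hm : 0 < m) (hn : 0 < n)
    (Gl Gu : Fin m → EuclideanSpace ℝ (Fin n) → ℝ)
    (hGl : ∀ i, ContDiff ℝ 1 (Gl i)) (hGu : ∀ i, ContDiff ℝ 1 (Gu i))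
    (hle : ∀ (i : Fin m) (x : EuclideanSpace ℝ (Fin n)), Gl i x ≤ Gu i x)
    (vv : EuclideanSpace ℝ (Fin n) → EuclideanSpace ℝ (Fin n))
    (hvmin : ∀ y w : EuclideanSpace ℝ (Fin n),
      psi m n Gl Gu y (vv y) + (1/2) * ‖vv y‖^2 ≤ psi m n Gl Gu y w + (1/2) * ‖w‖^2)
    (ρ σ : ℝ) (hρ : 0 < ρ) (hρσ : ρ < σ) (hσ : σ < 1)
    (x d : ℕ → EuclideanSpace ℝ (Fin n)) (t : ℕ → ℝ) (β : ℕ → ℝ)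
    (hx : ∀ k : ℕ, x (k+1) = x k + t k • d k)
    (ht : ∀ k : ℕ, 0 < t k)
    (hd0 : d 0 = vv (x 0))
    (hdk : ∀ k : ℕ, d (k+1) = vv (x (k+1)) + β (k+1) • d k)
    (hvne : ∀ k : ℕ, vv (x k) ≠ 0)
    (hA1 : AssumptionA1 m n Gl Gu (x 0))
    (hA2 : AssumptionA2 m n Gl Gu (x 0))
    (hdiv : ¬ Summable (fun k : ℕ => 1 / ‖d k‖^2))
    (hc : ∃ c : ℝ, 0 < c ∧ ∀ k : ℕ,
      psi m n Gl Gu (x k) (d k) ≤ c * psi m n Gl Gu (x k) (vv (x k)))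
    (hw : ∀ k : ℕ, StdWolfe m n Gl Gu ρ σ (x k) (d k) (t k)) :
    Filter.liminf (fun k : ℕ => ‖vv (x k)‖) Filter.atTop = 0 := by
  haveI : Nonempty (Fin m) := ⟨⟨0, hm⟩⟩
  obtain ⟨c, hc0, hcd⟩ := hc
  set ψ : ℕ → ℝ := fun k => psi m n Gl Gu (x k) (d k) with hψdef
  -- v gives negative psi
  have hψv : ∀ y, psi m n Gl Gu y (vv y) ≤ -(1/2) * ‖vv y‖^2 := by
    intro y
    have h := hvmin y 0
    rw [psi_zero m n hm, norm_zero] at h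
    nlinarith [h]
  have hψvk : ∀ k, psi m n Gl Gu (x k) (vv (x k)) < 0 := by
    intro k
    have hpos : 0 < ‖vv (x k)‖ := norm_pos_iff.mpr (hvne k)
    have := hψv (x k)
    nlinarith
  have hψneg : ∀ k, ψ k < 0 := by
    intro k
    calc ψ k ≤ c * psi m n Gl Gu (x k) (vv (x k)) := hcd k
    _ < 0 := mul_neg_of_pos_of_neg hc0 (hψvk k)
  -- monotonicity of objective values
  have hmono : ∀ (i : Fin m) (k : ℕ),
      Gl i (x (k+1)) ≤ Gl i (x k) ∧ Gu i (x (k+1)) ≤ Gu i (x k) := by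
    intro i k
    have hw1 := (hw k).1 i
    have hneg : ρ * t k * ψ k ≤ 0 :=
      le_of_lt (mul_neg_of_pos_of_neg (mul_pos hρ (ht k)) (hψneg k))
    rw [← hx k] at hw1
    exact ⟨by linarith [hw1.1], by linarith [hw1.2]⟩
  have hL0 : ∀ k, x k ∈ LevelSet m n Gl Gu (x 0) := by
    intro k
    induction k with
    | zero => intro i; exact ⟨le_refl _, le_refl _⟩
    | succ k ih =>
      intro i
      exact ⟨le_trans (hmono i k).1 (ih i).1, le_trans (hmono i k).2 (ih i).2⟩
  -- A2: lower bound for i0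
  set i0 : Fin m := ⟨0, hm⟩
  obtain ⟨⟨Cl, hCl⟩, -⟩ := hA2 x hL0 hmono i0
  -- Zoutendijk summability
  have hterm : ∀ k, ρ * (t k * (-ψ k)) ≤ Gl i0 (x k) - Gl i0 (x (k+1)) := by
    intro k
    have hw1 := ((hw k).1 i0).1
    rw [← hx k] at hw1
    nlinarith [hw1]
  have htn : ∀ k, 0 ≤ ρ * (t k * (-ψ k)) := by
    intro k
    exact le_of_lt (mul_pos hρ (mul_pos (ht k) (neg_pos.mpr (hψneg k))))
  have hsumb : ∀ K, ∑ k ∈ Finset.range K, ρ * (t k * (-ψ k)) ≤ Gl i0 (x 0) - Cl := by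
    intro K
    calc ∑ k ∈ Finset.range K, ρ * (t k * (-ψ k))
        ≤ ∑ k ∈ Finset.range K, (Gl i0 (x k) - Gl i0 (x (k+1))) :=
          Finset.sum_le_sum fun k _ => hterm k
      _ = Gl i0 (x 0) - Gl i0 (x K) := Finset.sum_range_sub' (fun k => Gl i0 (x k)) K
      _ ≤ Gl i0 (x 0) - Cl := by linarith [hCl K]
  have hsum0 : Summable (fun k => ρ * (t k * (-ψ k))) :=
    summable_of_sum_range_le htn hsumb
  have hsum : Summable (fun k => t k * (-ψ k)) := by
    have := hsum0.mul_left (1/ρ)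
    exact this.congr fun k => by rw [← mul_assoc, one_div_mul_cancel hρ.ne', one_mul]
  -- Lipschitz constant
  have hL : ∃ L : ℝ, 0 < L ∧ ∀ i : Fin m,
      ∀ y ∈ LevelSet m n Gl Gu (x 0), ∀ z ∈ LevelSet m n Gl Gu (x 0),
      ‖gloVec n (Gl i) (Gu i) y - gloVec n (Gl i) (Gu i) z‖ ≤ L * ‖y - z‖ ∧
      ‖ghiVec n (Gl i) (Gu i) y - ghiVec n (Gl i) (Gu i) z‖ ≤ L * ‖y - z‖ := by
    choose Lf hLf0 hLf using hA1
    refine ⟨Finset.univ.sup' (Finset.univ_nonempty) Lf, ?_, ?_⟩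
    · exact lt_of_lt_of_le (hLf0 i0) (Finset.le_sup' Lf (Finset.mem_univ i0))
    · intro i y hy z hz
      obtain ⟨h1, h2⟩ := hLf i y hy z hz
      have hle' : Lf i ≤ Finset.univ.sup' Finset.univ_nonempty Lf :=
        Finset.le_sup' Lf (Finset.mem_univ i)
      have hnn : (0:ℝ) ≤ ‖y - z‖ := norm_nonneg _
      constructor
      · exact le_trans h1 (by nlinarith)
      · exact le_trans h2 (by nlinarith)
  obtain ⟨L, hL0', hLP⟩ := hL
  -- psi Lipschitz in first argument over level set
  have hpsiLip : ∀ y ∈ LevelSet m n Gl Gu (x 0), ∀ z ∈ LevelSet m n Gl Gu (x 0),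
      ∀ w, psi m n Gl Gu y w ≤ psi m n Gl Gu z w + 2 * L * ‖y - z‖ * ‖w‖ := by
    intro y hy z hz w
    apply psi_le m n hm
    intro i
    have hd := phi_diff_le m n Gl Gu i y z w
    obtain ⟨h1, h2⟩ := hLP i y hy z hz
    have hphil := phi_le_psi m n hm Gl Gu i z w
    have hwn : (0:ℝ) ≤ ‖w‖ := norm_nonneg _
    nlinarith
  -- step size lower bound from W2
  have hstep : ∀ k, (1 - σ) * (-ψ k) ≤ 2 * L * t k * ‖d k‖^2 := by
    intro k
    have hw2 := (hw k).2
    rw [← hx k] at hw2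
    have hl := hpsiLip (x (k+1)) (hL0 (k+1)) (x k) (hL0 k) (d k)
    have hxk : x (k+1) - x k = t k • d k := by rw [hx k]; abel
    have hns : ‖x (k+1) - x k‖ = t k * ‖d k‖ := by
      rw [hxk, norm_smul, Real.norm_eq_abs, abs_of_pos (ht k)]
    rw [hns] at hl
    nlinarith [hl, hw2]
  -- main claim: frequently small
  have hfreq : ∀ ε > (0:ℝ), ∃ᶠ k in Filter.atTop, ‖vv (x k)‖ < ε := by
    intro ε hε
    by_contra hcon
    rw [Filter.not_frequently] at hcon
    simp only [not_lt] at hcon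
    obtain ⟨N, hN⟩ := Filter.eventually_atTop.mp hcon
    set δ : ℝ := c * ε^2 / 2 with hδdef
    have hδ0 : 0 < δ := by positivity
    have hψδ : ∀ k ≥ N, δ ≤ -ψ k := by
      intro k hk
      have h1 := hcd k
      have h2 := hψv (x k)
      have h3 := hN k hk
      have h4 : ε^2 ≤ ‖vv (x k)‖^2 := by nlinarith [norm_nonneg (vv (x k))]
      have : psi m n Gl Gu (x k) (vv (x k)) ≤ -(1/2) * ε^2 := by nlinarith
      calc δ = c * ε^2 / 2 := rfl
        _ ≤ c * (-psi m n Gl Gu (x k) (vv (x k))) := by nlinarith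
        _ ≤ -ψ k := by nlinarith
    have hdkpos : ∀ k, 0 < ‖d k‖ := by
      intro k
      rcases eq_or_ne (d k) 0 with h | h
      · exfalso
        have : ψ k = 0 := by rw [hψdef]; simp only; rw [h, psi_zero m n hm]
        linarith [hψneg k]
      · exact norm_pos_iff.mpr h
    set C : ℝ := 2 * L / ((1 - σ) * δ^2) with hCdef
    have hC0 : 0 < C := by
      apply div_pos (by linarith) (mul_pos (by linarith) (by positivity))
    have hbound : ∀ k ≥ N, 1 / ‖d k‖^2 ≤ C * (t k * (-ψ k)) := by
      intro k hk
      have h1 := hstep k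
      have h2 := hψδ k hk
      have h3 := hdkpos k
      have hnψ : 0 < -ψ k := lt_of_lt_of_le hδ0 h2
      have hσ1 : (0:ℝ) < 1 - σ := by linarith
      have hA : δ^2 ≤ (-ψ k)^2 := by nlinarith
      have hB : (1 - σ) * δ^2 ≤ (1 - σ) * (-ψ k)^2 :=
        mul_le_mul_of_nonneg_left hA hσ1.le
      have hC' : (1 - σ) * (-ψ k) * (-ψ k) ≤ 2 * L * t k * ‖d k‖^2 * (-ψ k) :=
        mul_le_mul_of_nonneg_right h1 hnψ.le
      have h4 : (1 - σ) * δ^2 ≤ 2 * L * (t k * (-ψ k)) * ‖d k‖^2 := by nlinarith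
      rw [div_le_iff₀ (by positivity), hCdef, div_mul_eq_mul_div, div_mul_eq_mul_div,
        le_div_iff₀ (mul_pos hσ1 (pow_pos hδ0 2))]
      nlinarith [h4]
    have hsum2 : Summable (fun k => 1 / ‖d (k + N)‖^2) := by
      apply Summable.of_nonneg_of_le (fun k => by positivity)
        (fun k => hbound (k + N) (Nat.le_add_left N k))
      exact ((summable_nat_add_iff N).mpr hsum).mul_left C
    exact hdiv ((summable_nat_add_iff N).mp hsum2)
  -- compute liminf
  rw [Filter.liminf_eq]
  set S : Set ℝ := {a | ∀ᶠ k in Filter.atTop, a ≤ ‖vv (x k)‖} with hSdef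
  have h0S : (0:ℝ) ∈ S := Filter.Eventually.of_forall fun k => norm_nonneg _
  have hub : ∀ ε > (0:ℝ), ∀ a ∈ S, a ≤ ε := by
    intro ε hε a ha
    obtain ⟨k, hk1, hk2⟩ := (ha.and_frequently (hfreq ε hε)).exists
    linarith
  have hbdd : BddAbove S := ⟨1, fun a ha => hub 1 one_pos a ha⟩
  apply le_antisymm
  · apply le_of_forall_pos_le_add
    intro ε hε
    rw [zero_add]
    exact csSup_le ⟨0, h0S⟩ (hub ε hε)
  · exact le_csSup hbdd h0S
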